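/- Let G be a finite group, N a normal subgroup of G, and M a subgroup of G with N ≤ M. Then for all h₁, g₁ ∈ M and all h₂, g₂ ∈ G: ∑ over pairs (h,g) ∈ G × G with g⁻¹hg ∈ M of [g₁N = (g⁻¹hg)N]·[g₂·h = 1]·[Ng = N·h₂·g·h₁⁻¹] equals ∑ over g ∈ G of [N·(g·g₁·g⁻¹) = N·g₂⁻¹]·[N·(g·h₁·g⁻¹) = N·h₂], where [P] denotes 1 if the condition P holds and 0 otherwise. (This is the simplification of the tunneling-algebra character formula in the case M' = G, N' = {e}.) -/

import Mathlib

open scoped Classical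

/-- Simplification of the tunneling-algebra character formula for `M' = G`, `N' = {e}`:
for `h₁, g₁ ∈ M` and `h₂, g₂ ∈ G`,
`∑_{(h,g) : g⁻¹hg ∈ M} [g₁N = (g⁻¹hg)N]·[g₂h = 1]·[Ng = N h₂ g h₁⁻¹]
  = ∑_{g ∈ G} [N(gg₁g⁻¹) = N g₂⁻¹]·[N(gh₁g⁻¹) = N h₂]`
(where, `N` being normal, coset equality is stated in `G ⧸ N`). -/
theorem tunneling_character_simplification {G : Type*} [Group G] [Fintype G]
    (N M : Subgroup G) [N.Normal] (hNM : N ≤ M)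
    (h₁ g₁ : G) (hh₁ : h₁ ∈ M) (hg₁ : g₁ ∈ M) (h₂ g₂ : G) :
    (∑ p : G × G,
        if p.2⁻¹ * p.1 * p.2 ∈ M ∧
            (g₁ : G ⧸ N) = ((p.2⁻¹ * p.1 * p.2 : G) : G ⧸ N) ∧
            g₂ * p.1 = 1 ∧
            (p.2 : G ⧸ N) = ((h₂ * p.2 * h₁⁻¹ : G) : G ⧸ N)
          then (1 : ℂ) else 0)
      =
    (∑ g : G,
        if ((g * g₁ * g⁻¹ : G) : G ⧸ N) = ((g₂⁻¹ : G) : G ⧸ N) ∧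
            ((g * h₁ * g⁻¹ : G) : G ⧸ N) = (h₂ : G ⧸ N)
          then (1 : ℂ) else 0) := by
  rw [Fintype.sum_prod_type_right]
  refine Finset.sum_congr rfl fun g _ => ?_
  rw [Finset.sum_eq_single g₂⁻¹]
  · congr 1
    simp only [eq_iff_iff, QuotientGroup.mk_mul, QuotientGroup.mk_inv]
    constructor
    · rintro ⟨hmem, hq1, -, hq2⟩
      constructor
      · rw [hq1]; group
      · have h3 := eq_mul_inv_iff_mul_eq.mp hq2
        rw [h3]
        group
    · rintro ⟨hq1, hq2⟩
      have e1 : (g₁ : G ⧸ N) = (g : G ⧸ N)⁻¹ * (g₂ : G ⧸ N)⁻¹ * g := by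
        rw [← hq1]; group
      have e2 : (g : G ⧸ N) = (h₂ : G ⧸ N) * g * (h₁ : G ⧸ N)⁻¹ := by
        rw [← hq2]; group
      refine ⟨?_, e1, mul_inv_cancel g₂, e2⟩
      have e1' : (g₁ : G ⧸ N) = ((g⁻¹ * g₂⁻¹ * g : G) : G ⧸ N) := by
        rw [e1]; push_cast; rfl
      have hn : g₁⁻¹ * (g⁻¹ * g₂⁻¹ * g) ∈ N := QuotientGroup.eq.mp e1'
      have : g⁻¹ * g₂⁻¹ * g = g₁ * (g₁⁻¹ * (g⁻¹ * g₂⁻¹ * g)) := by group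
      rw [this]
      exact M.mul_mem hg₁ (hNM hn)
  · intro h _ hne
    rw [if_neg]
    rintro ⟨-, -, hh, -⟩
    exact hne (eq_inv_of_mul_eq_one_right hh)
  · simp
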